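/- arXiv:1103.2612 — 2 statements merged into one kernel-verified Lean document; each statement's English description precedes it below -/
import Mathlib

section
/- Let S ⊆ ℝⁿ be a full-dimensional simplex with vertices v_0, …, v_n and diameter δ = max{‖x − x′‖ : x, x′ ∈ S}, let U ⊆ ℝᵐ be a compact set, let f : ℝⁿ → ℝⁿ be of class C² and g : ℝⁿ → ℝ^{n×m} be of class C¹ on a neighborhood of S. Let A ∈ ℝ^{n×n} and a ∈ ℝⁿ be the affine interpolant of f at the vertices, i.e. A v_i + a = f(v_i) for all i ∈ {0,…,n}, and let B = (1/(n+1)) Σ_{i=0}^{n} g(v_i). Then for every component index l ∈ {1,…,n}, every x ∈ S and every u ∈ U, |f_l(x) + g_{l•}(x)·u − A_{l•}·x − B_{l•}·u − a_l| ≤ α_l δ² + β_l δ max_{u∈U} ‖u‖, where α_l = (1/2) max_{x∈S} ρ(H(f_l)(x)) is half the maximum over S of the spectral radius of the Hessian matrix of f_l, and β_l = max_{x∈S} ‖J(g_{l•})(x)‖ is the maximum over S of the operator norm (induced by the Euclidean norm) of the Jacobian matrix of the l-th row g_{l•} of g. -/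
open Matrix Set

/-- Reinterpret a plain vector as an element of Euclidean space. -/
def toEuc {n : ℕ} (x : Fin n → ℝ) : EuclideanSpace ℝ (Fin n) := WithLp.toLp 2 x

/-- The spectral radius of a real matrix: the largest absolute value of an element
of its (real) spectrum.  For the (symmetric) Hessian matrices considered here this
is the usual spectral radius. -/
noncomputable def specRad {n : ℕ} (M : Matrix (Fin n) (Fin n) ℝ) : ℝ :=
  sSup ((fun μ => |μ|) '' spectrum ℝ M)

/-- The Hessian matrix of `φ : ℝⁿ → ℝ` at `x`, with entries the second partial
derivatives of `φ`. -/
noncomputable def hessMat {n : ℕ} (φ : EuclideanSpace ℝ (Fin n) → ℝ)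
    (x : EuclideanSpace ℝ (Fin n)) : Matrix (Fin n) (Fin n) ℝ :=
  fun i j => iteratedFDeriv ℝ 2 φ x
    ![EuclideanSpace.single i (1 : ℝ), EuclideanSpace.single j (1 : ℝ)]

lemma specRad_nonneg {n : ℕ} (M : Matrix (Fin n) (Fin n) ℝ) : 0 ≤ specRad M :=
  Real.sSup_nonneg (by rintro x ⟨μ, _, rfl⟩; exact abs_nonneg μ)

lemma abs_eig_le {n : ℕ} {M : Matrix (Fin n) (Fin n) ℝ} (hM : M.IsHermitian) (i : Fin n) :
    |hM.eigenvalues i| ≤ specRad M :=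
  le_csSup ((M.finite_spectrum.image _).bddAbove)
    ⟨_, hM.eigenvalues_mem_spectrum_real i, rfl⟩

lemma euc_sum_apply {N : ℕ} {ι : Type*} (s : Finset ι) (F : ι → EuclideanSpace ℝ (Fin N))
    (j : Fin N) : (∑ i ∈ s, F i) j = ∑ i ∈ s, F i j :=
  by rw [WithLp.ofLp_sum, Finset.sum_apply]

lemma abs_quadform_le {n : ℕ} {M : Matrix (Fin n) (Fin n) ℝ} (hM : M.IsHermitian)
    (h : EuclideanSpace ℝ (Fin n)) :
    |h ⬝ᵥ M *ᵥ h| ≤ specRad M * ‖h‖ ^ 2 := by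
  classical
  set b := hM.eigenvectorBasis with hb
  set c : Fin n → ℝ := fun i => b.repr h i with hc
  have hci : ∀ i, c i = (b i : Fin n → ℝ) ⬝ᵥ h := by
    intro i
    rw [hc]
    simp only [b.repr_apply_apply]
    simp [PiLp.inner_apply, RCLike.inner_apply, dotProduct]
    exact Finset.sum_congr rfl fun _ _ => mul_comm _ _
  have hfun : ∀ j, h j = ∑ i, c i * (b i : Fin n → ℝ) j := by
    intro j
    conv_lhs => rw [← b.sum_repr h]
    rw [euc_sum_apply]
    rfl
  have hMt : M.transpose = M := by
    have := hM.eq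
    rwa [conjTranspose_eq_transpose_of_trivial] at this
  have key : h ⬝ᵥ M *ᵥ h = ∑ i, hM.eigenvalues i * (c i * c i) := by
    have e1 : h ⬝ᵥ M *ᵥ h = ∑ i, c i * ((b i : Fin n → ℝ) ⬝ᵥ (M *ᵥ h)) := by
      rw [dotProduct]
      have e0 : ∀ j, h j * (M *ᵥ h) j = ∑ i, c i * ((b i : Fin n → ℝ) j * (M *ᵥ h) j) := by
        intro j
        rw [hfun j, Finset.sum_mul]
        exact Finset.sum_congr rfl fun i _ => by ring
      rw [Finset.sum_congr rfl fun j _ => e0 j, Finset.sum_comm]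
      refine Finset.sum_congr rfl fun i _ => ?_
      rw [dotProduct, Finset.mul_sum]
    rw [e1]
    refine Finset.sum_congr rfl fun i _ => ?_
    have e3 : M *ᵥ (b i : Fin n → ℝ) = hM.eigenvalues i • (b i : Fin n → ℝ) :=
      hM.mulVec_eigenvectorBasis i
    have e2 : (b i : Fin n → ℝ) ⬝ᵥ (M *ᵥ h) = hM.eigenvalues i * c i := by
      rw [dotProduct_mulVec, ← mulVec_transpose, hMt, e3, smul_dotProduct, hci i, smul_eq_mul]
    rw [e2]
    ring
  have hnorm : ‖h‖ ^ 2 = ∑ i, c i * c i := by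
    have hsum := b.sum_inner_mul_inner h h
    have e : ∀ i, (inner ℝ h (b i) : ℝ) * inner ℝ (b i) h = c i * c i := by
      intro i
      simp only [hc, b.repr_apply_apply]
      rw [real_inner_comm h (b i)]
    rw [← real_inner_self_eq_norm_sq, ← hsum]
    exact Finset.sum_congr rfl fun i _ => e i
  rw [key, hnorm, Finset.mul_sum]
  refine (Finset.abs_sum_le_sum_abs _ _).trans (Finset.sum_le_sum fun i _ => ?_)
  rw [abs_mul, abs_mul_self]
  exact mul_le_mul_of_nonneg_right (abs_eig_le hM i) (mul_self_nonneg _)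

lemma hessMat_apply {n : ℕ} (φ : EuclideanSpace ℝ (Fin n) → ℝ) (z : EuclideanSpace ℝ (Fin n))
    (i j : Fin n) :
    hessMat φ z i j = fderiv ℝ (fderiv ℝ φ) z (EuclideanSpace.single i (1:ℝ))
      (EuclideanSpace.single j (1:ℝ)) := by
  rw [hessMat, iteratedFDeriv_two_apply]
  simp

lemma euc_rep {N : ℕ} (w : EuclideanSpace ℝ (Fin N)) :
    w = ∑ i, w i • EuclideanSpace.single i (1:ℝ) := by
  have := (EuclideanSpace.basisFun (Fin N) ℝ).sum_repr w
  conv_lhs => rw [← this]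
  refine Finset.sum_congr rfl fun i _ => ?_
  rw [EuclideanSpace.basisFun_repr, EuclideanSpace.basisFun_apply]

lemma snd_fderiv_quadform {n : ℕ} (φ : EuclideanSpace ℝ (Fin n) → ℝ)
    {z : EuclideanSpace ℝ (Fin n)} (h : EuclideanSpace ℝ (Fin n)) :
    fderiv ℝ (fderiv ℝ φ) z h h = h ⬝ᵥ hessMat φ z *ᵥ h := by
  set B := fderiv ℝ (fderiv ℝ φ) z with hB
  have e1 : B h = ∑ i, h i • B (EuclideanSpace.single i (1:ℝ)) := by
    conv_lhs => rw [euc_rep h]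
    rw [map_sum]
    exact Finset.sum_congr rfl fun i _ => B.map_smul _ _
  have e2 : B h h = ∑ i, h i * B (EuclideanSpace.single i (1:ℝ)) h := by
    rw [e1]
    rw [ContinuousLinearMap.sum_apply]
    exact Finset.sum_congr rfl fun i _ => by simp
  have e3 : ∀ i, B (EuclideanSpace.single i (1:ℝ)) h
      = ∑ j, h j * hessMat φ z i j := by
    intro i
    conv_lhs => rw [euc_rep h]
    rw [map_sum]
    refine Finset.sum_congr rfl fun j _ => ?_
    rw [(B (EuclideanSpace.single i (1:ℝ))).map_smul, hessMat_apply]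
    simp
    exact Or.inl rfl
  rw [e2, dotProduct]
  refine Finset.sum_congr rfl fun i _ => ?_
  have e4 : (hessMat φ z *ᵥ h) i = ∑ j, h j * hessMat φ z i j := by
    simp only [Matrix.mulVec, dotProduct]
    exact Finset.sum_congr rfl fun j _ => mul_comm _ _
  rw [e3, e4]

lemma taylor_quad {N : ℕ} {V S : Set (EuclideanSpace ℝ (Fin N))} (hVopen : IsOpen V)
    (hSV : S ⊆ V) (hconv : Convex ℝ S) {φ : EuclideanSpace ℝ (Fin N) → ℝ}
    (hφ : ContDiffOn ℝ 2 φ V) {x y : EuclideanSpace ℝ (Fin N)} (hx : x ∈ S) (hy : y ∈ S) :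
    ∃ ξ ∈ S, |φ y - φ x - fderiv ℝ φ x (y - x)|
      = |fderiv ℝ (fderiv ℝ φ) ξ (y - x) (y - x)| / 2 := by
  have h01 : (0:ℝ) < 1 := one_pos
  have hud := uniqueDiffOn_Icc h01
  set h : EuclideanSpace ℝ (Fin N) := y - x with hh
  set γ : ℝ → EuclideanSpace ℝ (Fin N) := fun t => x + t • h with hγdef
  have hγS : ∀ t ∈ Icc (0:ℝ) 1, γ t ∈ S := fun t ht => hconv.add_smul_sub_mem hx hy ht
  have hγd : ∀ t : ℝ, HasDerivAt γ h t := by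
    intro t
    simpa [hγdef] using ((hasDerivAt_id t).smul_const h).const_add x
  have hφat : ∀ t ∈ Icc (0:ℝ) 1, ContDiffAt ℝ 2 φ (γ t) := fun t ht =>
    hφ.contDiffAt (hVopen.mem_nhds (hSV (hγS t ht)))
  set ψ : ℝ → ℝ := fun t => φ (γ t) with hψdef
  have hψ' : ∀ t ∈ Icc (0:ℝ) 1, HasDerivAt ψ (fderiv ℝ φ (γ t) h) t := fun t ht =>
    (((hφat t ht).differentiableAt two_ne_zero).hasFDerivAt).comp_hasDerivAt t (hγd t)
  have hψ'' : ∀ t ∈ Icc (0:ℝ) 1,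
      HasDerivAt (fun s => fderiv ℝ φ (γ s) h) (fderiv ℝ (fderiv ℝ φ) (γ t) h h) t := by
    intro t ht
    have h1 : ContDiffAt ℝ 1 (fderiv ℝ φ) (γ t) := (hφat t ht).fderiv_right (le_refl 2)
    have h3 := ((h1.differentiableAt one_ne_zero).hasFDerivAt).comp_hasDerivAt t (hγd t)
    exact (ContinuousLinearMap.apply ℝ ℝ h).hasFDerivAt.comp_hasDerivAt t h3
  have hγcd : ContDiff ℝ 2 γ := contDiff_const.add (contDiff_id.smul contDiff_const)
  have hψcd2 : ContDiffOn ℝ 2 ψ (Icc (0:ℝ) 1) :=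
    hφ.comp (hγcd.contDiffOn) (fun t ht => hSV (hγS t ht))
  have hψcd : ContDiffOn ℝ 1 ψ (Icc (0:ℝ) 1) := hψcd2.of_le one_le_two
  have heq : ∀ t ∈ Icc (0:ℝ) 1, iteratedDerivWithin 1 ψ (Icc (0:ℝ) 1) t
      = fderiv ℝ φ (γ t) h := by
    intro t ht
    rw [iteratedDerivWithin_one]
    exact (hψ' t ht).hasDerivWithinAt.derivWithin (hud t ht)
  have hf' : DifferentiableOn ℝ (iteratedDerivWithin 1 ψ (Icc (0:ℝ) 1)) (Ioo (0:ℝ) 1) := by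
    have hdo : DifferentiableOn ℝ (fun s => fderiv ℝ φ (γ s) h) (Ioo (0:ℝ) 1) := fun t ht =>
      ((hψ'' t (Ioo_subset_Icc_self ht)).differentiableAt).differentiableWithinAt
    exact hdo.congr (fun t ht => heq t (Ioo_subset_Icc_self ht))
  obtain ⟨ξ', hξ', htay⟩ := taylor_mean_remainder_lagrange (f := ψ) (n := 1) h01.ne
    (by rwa [uIcc_of_le h01.le]) (by rwa [uIcc_of_le h01.le, uIoo_of_lt h01])
  simp only [uIcc_of_le h01.le, uIoo_of_lt h01] at hξ' htay
  have hξmem : ξ' ∈ Icc (0:ℝ) 1 := Ioo_subset_Icc_self hξ'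
  have hγ0 : γ 0 = x := by simp [hγdef]
  have hγ1 : γ 1 = y := by simp [hγdef, hh]
  have h0mem : (0:ℝ) ∈ Icc (0:ℝ) 1 := ⟨le_refl 0, zero_le_one⟩
  have htv : taylorWithinEval ψ 1 (Icc (0:ℝ) 1) 0 1 = ψ 0 + fderiv ℝ φ x h := by
    rw [taylorWithinEval_succ, taylor_within_zero_eval]
    rw [heq 0 h0mem, hγ0]
    norm_num
  have h2eq : iteratedDerivWithin 2 ψ (Icc (0:ℝ) 1) ξ'
      = fderiv ℝ (fderiv ℝ φ) (γ ξ') h h := by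
    rw [iteratedDerivWithin_succ]
    rw [derivWithin_congr (fun t ht => heq t ht) (heq ξ' hξmem)]
    exact (hψ'' ξ' hξmem).hasDerivWithinAt.derivWithin (hud ξ' hξmem)
  refine ⟨γ ξ', hγS ξ' hξmem, ?_⟩
  have e5 : ψ 1 = φ y := by show φ (γ 1) = φ y; rw [hγ1]
  have e6 : ψ 0 = φ x := by show φ (γ 0) = φ x; rw [hγ0]
  have h2eq' : iteratedDerivWithin (1 + 1) ψ (Icc (0:ℝ) 1) ξ'
      = fderiv ℝ (fderiv ℝ φ) (γ ξ') h h := h2eq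
  rw [htv, e5, e6, h2eq'] at htay
  norm_num at htay
  have hE : φ y - φ x - fderiv ℝ φ x h = fderiv ℝ (fderiv ℝ φ) (γ ξ') h h / 2 := by
    rw [← htay]; ring
  rw [hE, abs_div, abs_two]

/-- Proposition 1 of the paper.
Let `S ⊆ ℝⁿ` be a full-dimensional simplex with vertices `v 0, …, v n` and diameter `δ`,
`U ⊆ ℝᵐ` compact, `f` of class `C²` and `g` of class `C¹` on a neighborhood of `S`.
Let `A, a` be the affine interpolant of `f` at the vertices and
`B = (1/(n+1)) ∑ᵢ g(vᵢ)`.  Then for every `l`, `x ∈ S` and `u ∈ U`,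
`|f_l(x) + g_{l•}(x)·u − A_{l•}·x − B_{l•}·u − a_l| ≤ α_l δ² + β_l δ max_{u∈U}‖u‖`,
where `α_l = (1/2) max_{x∈S} ρ(H(f_l)(x))` and `β_l = max_{x∈S} ‖J(g_{l•})(x)‖`
(operator norm induced by the Euclidean norm, here the Fréchet derivative norm). -/
theorem hybridization_error_bound
    (n mdim : ℕ) (v : Fin (n + 1) → EuclideanSpace ℝ (Fin n))
    (hv : AffineIndependent ℝ v)
    (S : Set (EuclideanSpace ℝ (Fin n)))
    (hS : S = convexHull ℝ (Set.range v))
    (δ : ℝ) (hδ : IsGreatest {d : ℝ | ∃ x ∈ S, ∃ y ∈ S, d = ‖x - y‖} δ)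
    (U : Set (EuclideanSpace ℝ (Fin mdim))) (hU : IsCompact U)
    (V : Set (EuclideanSpace ℝ (Fin n))) (hVopen : IsOpen V) (hSV : S ⊆ V)
    (f : EuclideanSpace ℝ (Fin n) → EuclideanSpace ℝ (Fin n))
    (hf : ContDiffOn ℝ 2 f V)
    (g : EuclideanSpace ℝ (Fin n) → Matrix (Fin n) (Fin mdim) ℝ)
    (hg : ∀ l : Fin n, ContDiffOn ℝ 1 (fun y => toEuc (g y l)) V)
    (A : Matrix (Fin n) (Fin n) ℝ) (a : EuclideanSpace ℝ (Fin n))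
    (hinterp : ∀ i, toEuc (A *ᵥ v i) + a = f (v i))
    (B : Matrix (Fin n) (Fin mdim) ℝ)
    (hB : B = (((n : ℝ) + 1)⁻¹) • ∑ i : Fin (n + 1), g (v i))
    (α : Fin n → ℝ)
    (hα : ∀ l, IsGreatest
        ((fun y => (1 / 2) * specRad (hessMat (fun z => f z l) y)) '' S) (α l))
    (β : Fin n → ℝ)
    (hβ : ∀ l, IsGreatest
        ((fun y => ‖fderiv ℝ (fun z => toEuc (g z l)) y‖) '' S) (β l))
    (Mu : ℝ) (hMu : IsGreatest ((fun u => ‖u‖) '' U) Mu)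
    (l : Fin n) (x : EuclideanSpace ℝ (Fin n)) (hx : x ∈ S)
    (u : EuclideanSpace ℝ (Fin mdim)) (hu : u ∈ U) :
    |f x l + g x l ⬝ᵥ u - A l ⬝ᵥ x - B l ⬝ᵥ u - a l|
      ≤ α l * δ ^ 2 + β l * δ * Mu := by
  classical
  have hconv : Convex ℝ S := hS ▸ convex_convexHull ℝ _
  have hvS : ∀ i, v i ∈ S := fun i => hS ▸ subset_convexHull ℝ _ (mem_range_self i)
  -- nonnegativity facts
  have hδnn : 0 ≤ δ := by
    obtain ⟨x0, _, y0, _, heq0⟩ := hδ.1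
    rw [heq0]; exact norm_nonneg _
  have hMunn : 0 ≤ Mu := by
    obtain ⟨u0, _, hequ⟩ := hMu.1
    rw [← hequ]; exact norm_nonneg _
  have hαnn : 0 ≤ α l := by
    obtain ⟨y0, _, heqα⟩ := (hα l).1
    rw [← heqα]
    have := specRad_nonneg (hessMat (fun z => f z l) y0)
    linarith
  have hβnn : 0 ≤ β l := by
    obtain ⟨y0, _, heqβ⟩ := (hβ l).1
    rw [← heqβ]; exact norm_nonneg _
  -- barycentric coordinates
  have hx' : x ∈ convexHull ℝ (Set.range v) := hS ▸ hx
  rw [convexHull_range_eq_exists_affineCombination] at hx'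
  obtain ⟨s, w, hw0, hw1, hxw⟩ := hx'
  set W : Fin (n + 1) → ℝ := fun i => if i ∈ s then w i else 0 with hWdef
  have hW0 : ∀ i, 0 ≤ W i := by
    intro i
    by_cases hi : i ∈ s <;> simp [hWdef, hi]
    exact hw0 i hi
  have hW1 : ∑ i, W i = 1 := by
    rw [hWdef]
    rw [Finset.sum_ite_mem, Finset.univ_inter]
    exact hw1
  have hxW : ∑ i, W i • v i = x := by
    calc ∑ i, W i • v i
        = ∑ i, (if i ∈ s then w i • v i else (0 : EuclideanSpace ℝ (Fin n))) :=
          Finset.sum_congr rfl fun i _ => by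
            by_cases hi : i ∈ s <;> simp [hWdef, hi]
      _ = ∑ i ∈ Finset.univ ∩ s, w i • v i := Finset.sum_ite_mem _ _ _
      _ = x := by
          rw [Finset.univ_inter, ← Finset.affineCombination_eq_linear_combination s v w hw1, hxw]
  -- the C² components of f
  have hfl : ContDiffOn ℝ 2 (fun z => f z l) V := by
    have h0 := (EuclideanSpace.proj (𝕜 := ℝ) l).contDiff.comp_contDiffOn hf
    exact h0
  -- per-vertex Taylor bound
  have hRbound : ∀ i, |f (v i) l - f x l - fderiv ℝ (fun z => f z l) x (v i - x)|
      ≤ α l * δ ^ 2 := by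
    intro i
    obtain ⟨ξ, hξS, hEq⟩ := taylor_quad hVopen hSV hconv hfl hx (hvS i)
    have hcd2 : ContDiffAt ℝ 2 (fun z => f z l) ξ :=
      hfl.contDiffAt (hVopen.mem_nhds (hSV hξS))
    have hsym := hcd2.isSymmSndFDerivAt (by simp)
    have hherm : (hessMat (fun z => f z l) ξ).IsHermitian := by
      refine Matrix.ext fun i' j' => ?_
      rw [Matrix.conjTranspose_apply, hessMat_apply, hessMat_apply, star_trivial]
      exact hsym _ _
    have hquad := snd_fderiv_quadform (fun z => f z l) (z := ξ) (v i - x)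
    have h1 := abs_quadform_le hherm (v i - x)
    have hspec : (1 / 2) * specRad (hessMat (fun z => f z l) ξ) ≤ α l :=
      (hα l).2 ⟨ξ, hξS, rfl⟩
    have hnle : ‖v i - x‖ ≤ δ := hδ.2 ⟨v i, hvS i, x, hx, rfl⟩
    have hn2 : ‖v i - x‖ ^ 2 ≤ δ ^ 2 := pow_le_pow_left₀ (norm_nonneg _) hnle 2
    rw [hEq, hquad]
    calc |(v i - x) ⬝ᵥ hessMat (fun z => f z l) ξ *ᵥ (v i - x)| / 2
        ≤ (specRad (hessMat (fun z => f z l) ξ) * ‖v i - x‖ ^ 2) / 2 := by simp only [WithLp.ofLp_sub] at h1 ⊢; linarith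
      _ = (1 / 2 * specRad (hessMat (fun z => f z l) ξ)) * ‖v i - x‖ ^ 2 := by ring
      _ ≤ α l * δ ^ 2 := mul_le_mul hspec hn2 (by positivity) hαnn
  -- interpolation property, componentwise
  have hfl_interp : ∀ i, A l ⬝ᵥ (v i) + a l = f (v i) l := by
    intro i
    have := congrArg (fun z : EuclideanSpace ℝ (Fin n) => z l) (hinterp i)
    simpa [toEuc, Matrix.mulVec] using this
  -- A-part algebra
  have hAx : A l ⬝ᵥ x = ∑ i, W i * (A l ⬝ᵥ (v i)) := by
    have hxfun : ∀ j, x j = ∑ i, W i * (v i) j := by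
      intro j
      conv_lhs => rw [← hxW]
      rw [euc_sum_apply]
      rfl
    rw [dotProduct]
    have e : ∀ j, A l j * x j = ∑ i, W i * (A l j * (v i) j) := fun j => by
      rw [hxfun j, Finset.mul_sum]
      exact Finset.sum_congr rfl fun i _ => by ring
    rw [Finset.sum_congr rfl fun j _ => e j, Finset.sum_comm]
    exact Finset.sum_congr rfl fun i _ => by rw [dotProduct, Finset.mul_sum]
  have key1 : A l ⬝ᵥ x + a l = ∑ i, W i * f (v i) l := by
    rw [hAx]
    have ha : a l = ∑ i, W i * a l := by rw [← Finset.sum_mul, hW1, one_mul]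
    calc (∑ i, W i * (A l ⬝ᵥ (v i))) + a l
        = ∑ i, (W i * (A l ⬝ᵥ (v i)) + W i * a l) := by
          rw [Finset.sum_add_distrib, ← Finset.sum_mul, hW1, one_mul]
      _ = ∑ i, W i * f (v i) l := by
          refine Finset.sum_congr rfl fun i _ => ?_
          rw [← hfl_interp i]; ring
  -- the gradient term vanishes
  have hzero : ∑ i, W i * fderiv ℝ (fun z => f z l) x (v i - x) = 0 := by
    have hz : ∑ i, W i • (v i - x) = (0 : EuclideanSpace ℝ (Fin n)) := by
      calc ∑ i, W i • (v i - x)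
          = ∑ i, (W i • v i - W i • x) :=
            Finset.sum_congr rfl fun i _ => smul_sub _ _ _
        _ = (∑ i, W i • v i) - ∑ i, W i • x := Finset.sum_sub_distrib _ _
        _ = x - (∑ i, W i) • x := by rw [hxW, ← Finset.sum_smul]
        _ = 0 := by rw [hW1, one_smul, sub_self]
    calc ∑ i, W i * fderiv ℝ (fun z => f z l) x (v i - x)
        = ∑ i, fderiv ℝ (fun z => f z l) x (W i • (v i - x)) := by
          refine Finset.sum_congr rfl fun i _ => ?_
          rw [(fderiv ℝ (fun z => f z l) x).map_smul, smul_eq_mul]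
      _ = fderiv ℝ (fun z => f z l) x (∑ i, W i • (v i - x)) := (map_sum _ _ _).symm
      _ = 0 := by rw [hz, map_zero]
  have hT1 : f x l - (A l ⬝ᵥ x + a l)
      = -∑ i, W i * (f (v i) l - f x l - fderiv ℝ (fun z => f z l) x (v i - x)) := by
    rw [key1]
    have e1 : ∑ i, W i * (f (v i) l - f x l - fderiv ℝ (fun z => f z l) x (v i - x))
        = (∑ i, W i * f (v i) l) - (∑ i, W i * f x l)
          - ∑ i, W i * fderiv ℝ (fun z => f z l) x (v i - x) := by
      rw [← Finset.sum_sub_distrib, ← Finset.sum_sub_distrib]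
      exact Finset.sum_congr rfl fun i _ => by ring
    have e2 : ∑ i, W i * f x l = f x l := by rw [← Finset.sum_mul, hW1, one_mul]
    rw [e1, hzero, e2]
    ring
  have hT1bound : |f x l - (A l ⬝ᵥ x + a l)| ≤ α l * δ ^ 2 := by
    rw [hT1, abs_neg]
    refine (Finset.abs_sum_le_sum_abs _ _).trans ?_
    have step : ∀ i ∈ Finset.univ,
        |W i * (f (v i) l - f x l - fderiv ℝ (fun z => f z l) x (v i - x))|
          ≤ W i * (α l * δ ^ 2) := by
      intro i _
      rw [abs_mul, abs_of_nonneg (hW0 i)]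
      exact mul_le_mul_of_nonneg_left (hRbound i) (hW0 i)
    refine (Finset.sum_le_sum step).trans ?_
    rw [← Finset.sum_mul, hW1, one_mul]
  -- B-part
  have hc1 : ((n : ℝ) + 1) ≠ 0 := by positivity
  have hcnn : (0:ℝ) ≤ ((n : ℝ) + 1)⁻¹ := by positivity
  have hBl : ∀ j, B l j = ((n : ℝ) + 1)⁻¹ * ∑ i, g (v i) l j := by
    intro j
    rw [hB]
    simp [Matrix.smul_apply, Matrix.sum_apply]
  have hBlu : B l ⬝ᵥ u = ((n : ℝ) + 1)⁻¹ * ∑ i, g (v i) l ⬝ᵥ u := by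
    rw [dotProduct]
    have e : ∀ j, B l j * u j = ((n : ℝ) + 1)⁻¹ * ∑ i, g (v i) l j * u j := fun j => by
      rw [hBl j, mul_assoc, Finset.sum_mul]
    rw [Finset.sum_congr rfl fun j _ => e j, ← Finset.mul_sum, Finset.sum_comm]
    rfl
  have hgxu : g x l ⬝ᵥ u = ((n : ℝ) + 1)⁻¹ * ∑ _i : Fin (n + 1), g x l ⬝ᵥ u := by
    rw [Finset.sum_const, Finset.card_univ, Fintype.card_fin, nsmul_eq_mul]
    push_cast
    field_simp
  have hT2 : g x l ⬝ᵥ u - B l ⬝ᵥ u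
      = ((n : ℝ) + 1)⁻¹ * ∑ i, (g x l ⬝ᵥ u - g (v i) l ⬝ᵥ u) := by
    rw [Finset.sum_sub_distrib, mul_sub, ← hBlu, ← hgxu]
  -- per-vertex bound for g
  have hdi : ∀ i, |g x l ⬝ᵥ u - g (v i) l ⬝ᵥ u| ≤ β l * δ * Mu := by
    intro i
    have hwin : g x l ⬝ᵥ u - g (v i) l ⬝ᵥ u
        = (inner ℝ (toEuc (g x l) - toEuc (g (v i) l)) u : ℝ) := by
      simp [PiLp.inner_apply, RCLike.inner_apply, dotProduct, toEuc, PiLp.sub_apply,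
        sub_mul, Finset.sum_sub_distrib, mul_comm]
    have hlipi : ‖toEuc (g x l) - toEuc (g (v i) l)‖ ≤ β l * ‖x - v i‖ := by
      have := hconv.norm_image_sub_le_of_norm_fderiv_le
        (f := fun z => toEuc (g z l)) (C := β l)
        (fun y hy => ((hg l).contDiffAt (hVopen.mem_nhds (hSV hy))).differentiableAt one_ne_zero)
        (fun y hy => (hβ l).2 ⟨y, hy, rfl⟩) (hvS i) hx
      simpa using this
    have hxvδ : ‖x - v i‖ ≤ δ := hδ.2 ⟨x, hx, v i, hvS i, rfl⟩
    have huMu : ‖u‖ ≤ Mu := hMu.2 ⟨u, hu, rfl⟩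
    rw [hwin]
    calc |(inner ℝ (toEuc (g x l) - toEuc (g (v i) l)) u : ℝ)|
        ≤ ‖toEuc (g x l) - toEuc (g (v i) l)‖ * ‖u‖ := abs_real_inner_le_norm _ _
      _ ≤ (β l * δ) * Mu := by
          refine mul_le_mul ?_ huMu (norm_nonneg _) (by positivity)
          exact hlipi.trans (mul_le_mul_of_nonneg_left hxvδ hβnn)
      _ = β l * δ * Mu := by ring
  have hT2bound : |g x l ⬝ᵥ u - B l ⬝ᵥ u| ≤ β l * δ * Mu := by
    rw [hT2, abs_mul, abs_of_nonneg hcnn]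
    calc ((n : ℝ) + 1)⁻¹ * |∑ i, (g x l ⬝ᵥ u - g (v i) l ⬝ᵥ u)|
        ≤ ((n : ℝ) + 1)⁻¹ * ∑ i, |g x l ⬝ᵥ u - g (v i) l ⬝ᵥ u| :=
          mul_le_mul_of_nonneg_left (Finset.abs_sum_le_sum_abs _ _) hcnn
      _ ≤ ((n : ℝ) + 1)⁻¹ * ∑ _i : Fin (n + 1), (β l * δ * Mu) :=
          mul_le_mul_of_nonneg_left (Finset.sum_le_sum fun i _ => hdi i) hcnn
      _ = β l * δ * Mu := by
          rw [Finset.sum_const, Finset.card_univ, Fintype.card_fin, nsmul_eq_mul]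
          push_cast
          field_simp
  -- conclusion
  have hsplit : f x l + g x l ⬝ᵥ u - A l ⬝ᵥ x - B l ⬝ᵥ u - a l
      = (f x l - (A l ⬝ᵥ x + a l)) + (g x l ⬝ᵥ u - B l ⬝ᵥ u) := by ring
  rw [hsplit]
  exact (abs_add_le _ _).trans (add_le_add hT1bound hT2bound)
end

section
/- Let S ⊆ ℝⁿ be a full-dimensional simplex, let U ⊆ ℝᵐ be a compact convex polytope, let W ⊆ ℝⁿ be a nonempty convex compact set, let f : ℝⁿ → ℝⁿ and g : ℝⁿ → ℝ^{n×m} be continuous on S, and let A ∈ ℝ^{n×n}, B ∈ ℝ^{n×m}, a ∈ ℝⁿ satisfy the conservativeness condition: for all x ∈ S and all u ∈ U, f(x) + g(x)u − A x − B u − a ∈ W. Let h : S → U be an affine map with h(x) ∈ U for all x ∈ S, let F be a facet of S with outward unit normal m, and suppose m·(A v + B h(v) + a) ≤ −max_{w∈W} m·w for every vertex v of F. Then m·(f(x) + g(x) h(x)) ≤ 0 for every x ∈ F. -/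
open Matrix Set

private lemma dotE_add {n : ℕ} (u w z : EuclideanSpace ℝ (Fin n)) :
    u ⬝ᵥ (w + z) = u ⬝ᵥ w + u ⬝ᵥ z := by
  simp [dotProduct, PiLp.add_apply, mul_add, Finset.sum_add_distrib]

private lemma dotE_sub {n : ℕ} (u w z : EuclideanSpace ℝ (Fin n)) :
    u ⬝ᵥ (w - z) = u ⬝ᵥ w - u ⬝ᵥ z := by
  simp [dotProduct, PiLp.sub_apply, mul_sub, Finset.sum_sub_distrib]

/-- key step in the proof of Proposition 9 of the paper.
Let `S` be a full-dimensional simplex, `U` a compact convex polytope, `W` a nonempty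
convex compact set, and suppose the affine data `(A, B, a, W)` is conservative for the
control system `(f, g)` on `S`.  If `h` is an affine map sending `S` into `U` and `F`
is a facet of `S` with outward unit normal `m` such that
`m·(A v + B h(v) + a) ≤ - max_{w∈W} m·w` at every vertex `v` of `F`, then
`m·(f(x) + g(x) h(x)) ≤ 0` for every `x ∈ F`. -/
theorem facet_blocked_for_nonlinear_system
    (n mdim : ℕ) (v : Fin (n + 1) → EuclideanSpace ℝ (Fin n))
    (hv : AffineIndependent ℝ v)
    (S : Set (EuclideanSpace ℝ (Fin n)))
    (hS : S = convexHull ℝ (Set.range v))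
    (U : Set (EuclideanSpace ℝ (Fin mdim)))
    (hUcomp : IsCompact U) (hUconv : Convex ℝ U)
    (hUpoly : ∃ Uf : Finset (EuclideanSpace ℝ (Fin mdim)), U = convexHull ℝ ↑Uf)
    (W : Set (EuclideanSpace ℝ (Fin n)))
    (hWne : W.Nonempty) (hWconv : Convex ℝ W) (hWcomp : IsCompact W)
    (f : EuclideanSpace ℝ (Fin n) → EuclideanSpace ℝ (Fin n))
    (hf : ContinuousOn f S)
    (g : EuclideanSpace ℝ (Fin n) → Matrix (Fin n) (Fin mdim) ℝ)
    (hg : ∀ l : Fin n, ContinuousOn (fun y => toEuc (g y l)) S)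
    (A : Matrix (Fin n) (Fin n) ℝ) (B : Matrix (Fin n) (Fin mdim) ℝ)
    (a : EuclideanSpace ℝ (Fin n))
    (hcons : ∀ x ∈ S, ∀ u ∈ U,
      f x + toEuc (g x *ᵥ u) - toEuc (A *ᵥ x) - toEuc (B *ᵥ u) - a ∈ W)
    (K : Matrix (Fin mdim) (Fin n) ℝ) (k : EuclideanSpace ℝ (Fin mdim))
    (h : EuclideanSpace ℝ (Fin n) → EuclideanSpace ℝ (Fin mdim))
    (hh : ∀ x, h x = toEuc (K *ᵥ x) + k)
    (hhU : ∀ x ∈ S, h x ∈ U)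
    (j : Fin (n + 1))
    (m : EuclideanSpace ℝ (Fin n)) (c : ℝ)
    (hm_unit : ‖m‖ = 1)
    (hm_facet : ∀ i, i ≠ j → m ⬝ᵥ v i = c)
    (hm_out : m ⬝ᵥ v j < c)
    (hvert : ∀ i, i ≠ j →
      m ⬝ᵥ (toEuc (A *ᵥ v i) + toEuc (B *ᵥ h (v i)) + a)
        ≤ - sSup ((fun w : EuclideanSpace ℝ (Fin n) => m ⬝ᵥ w) '' W))
    (x : EuclideanSpace ℝ (Fin n))
    (hx : x ∈ convexHull ℝ (v '' {i | i ≠ j})) :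
    m ⬝ᵥ (f x + toEuc (g x *ᵥ h x)) ≤ 0 := by
  -- x ∈ S
  have hxS : x ∈ S := by
    rw [hS]
    exact convexHull_mono (by intro y hy; rcases hy with ⟨i, _, rfl⟩; exact ⟨i, rfl⟩) hx
  set M : ℝ := sSup ((fun w : EuclideanSpace ℝ (Fin n) => m ⬝ᵥ w) '' W) with hM
  -- the dot product with m is continuous
  have hcont : Continuous fun w : EuclideanSpace ℝ (Fin n) => m ⬝ᵥ w := by
    unfold dotProduct
    exact continuous_finset_sum _ fun i _ =>
      continuous_const.mul (EuclideanSpace.proj i).continuous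
  have hbdd : BddAbove ((fun w : EuclideanSpace ℝ (Fin n) => m ⬝ᵥ w) '' W) := (hWcomp.image hcont).bddAbove
  -- the disturbance term
  have hw : f x + toEuc (g x *ᵥ h x) - toEuc (A *ᵥ x) - toEuc (B *ᵥ h x) - a ∈ W :=
    hcons x hxS (h x) (hhU x hxS)
  have hwM : m ⬝ᵥ (f x + toEuc (g x *ᵥ h x) - toEuc (A *ᵥ x) - toEuc (B *ᵥ h x) - a) ≤ M :=
    le_csSup hbdd ⟨_, hw, rfl⟩
  -- the affine part: sublevel set is convex and contains the facet vertices
  have haff : m ⬝ᵥ (toEuc (A *ᵥ x) + toEuc (B *ᵥ h x) + a) ≤ -M := by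
    have hexp : ∀ y : EuclideanSpace ℝ (Fin n),
        m ⬝ᵥ (toEuc (A *ᵥ y) + toEuc (B *ᵥ (toEuc (K *ᵥ y) + k)) + a)
        = m ⬝ᵥ (A *ᵥ y) + m ⬝ᵥ (B *ᵥ (K *ᵥ y)) + (m ⬝ᵥ (B *ᵥ k) + m ⬝ᵥ a) := by
      intro y
      simp only [toEuc]
      rw [Matrix.mulVec_add, dotProduct_add, dotProduct_add, dotProduct_add]
      ring
    have hmem : x ∈ {y : EuclideanSpace ℝ (Fin n) |
        m ⬝ᵥ (toEuc (A *ᵥ y) + toEuc (B *ᵥ (toEuc (K *ᵥ y) + k)) + a) ≤ -M} := by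
      refine convexHull_min ?_ ?_ hx
      · rintro y ⟨i, hi, rfl⟩
        have := hvert i hi
        rwa [hh (v i)] at this
      · intro p hp q hq s t hs ht hst
        simp only [Set.mem_setOf_eq, hexp] at hp hq ⊢
        have h1 : A *ᵥ (s • p + t • q : EuclideanSpace ℝ (Fin n))
            = s • (A *ᵥ p) + t • (A *ᵥ q) := by
          rw [WithLp.ofLp_add, WithLp.ofLp_smul, WithLp.ofLp_smul,
            Matrix.mulVec_add, Matrix.mulVec_smul, Matrix.mulVec_smul]
        have h2 : K *ᵥ (s • p + t • q : EuclideanSpace ℝ (Fin n))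
            = s • (K *ᵥ p) + t • (K *ᵥ q) := by
          rw [WithLp.ofLp_add, WithLp.ofLp_smul, WithLp.ofLp_smul,
            Matrix.mulVec_add, Matrix.mulVec_smul, Matrix.mulVec_smul]
        rw [h1, h2, Matrix.mulVec_add, Matrix.mulVec_smul, Matrix.mulVec_smul,
          dotProduct_add, dotProduct_add, dotProduct_smul, dotProduct_smul,
          dotProduct_smul, dotProduct_smul]
        have hcomb := add_le_add (mul_le_mul_of_nonneg_left hp hs)
          (mul_le_mul_of_nonneg_left hq ht)
        calc s • (m ⬝ᵥ (A *ᵥ p)) + t • (m ⬝ᵥ (A *ᵥ q)) +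
              (s • (m ⬝ᵥ (B *ᵥ (K *ᵥ p))) + t • (m ⬝ᵥ (B *ᵥ (K *ᵥ q)))) +
              (m ⬝ᵥ (B *ᵥ k) + m ⬝ᵥ a)
            = s * (m ⬝ᵥ (A *ᵥ p) + m ⬝ᵥ (B *ᵥ (K *ᵥ p)) +
                (m ⬝ᵥ (B *ᵥ k) + m ⬝ᵥ a)) +
              t * (m ⬝ᵥ (A *ᵥ q) + m ⬝ᵥ (B *ᵥ (K *ᵥ q)) +
                (m ⬝ᵥ (B *ᵥ k) + m ⬝ᵥ a)) := by
              simp only [smul_eq_mul]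
              linear_combination (-(m ⬝ᵥ (B *ᵥ k) + m ⬝ᵥ a)) * hst
          _ ≤ s * (-M) + t * (-M) := hcomb
          _ = -M := by linear_combination (-M) * hst
    simp only [Set.mem_setOf_eq] at hmem
    rwa [← WithLp.ofLp_add (x := toEuc (K *ᵥ x)) (y := k), ← hh x] at hmem
  -- combine
  have hsplit : m ⬝ᵥ (f x + toEuc (g x *ᵥ h x))
      = m ⬝ᵥ (f x + toEuc (g x *ᵥ h x) - toEuc (A *ᵥ x) - toEuc (B *ᵥ h x) - a)
        + m ⬝ᵥ (toEuc (A *ᵥ x) + toEuc (B *ᵥ h x) + a) := by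
    simp only [dotE_add, dotE_sub, dotProduct_add, dotProduct_sub]
    ring
  rw [hsplit]
  linarith
end
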